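/- Let m ≤ k ≤ n be positive integers, a_1,…,a_n ∈ ℝ^m, x ∈ [0,1]^n with Σ_{i∈[n]} x_i = k, and α ∈ [0,1]. Let μ be a probability distribution on the subsets of [n] (i.e., μ : 2^{[n]} → [0,1] with Σ_S μ(S) = 1) supported on subsets of size k. If μ is m-wise α-positively correlated with respect to x, i.e., for every T ⊆ [n] with |T| = m one has Σ_{S : T ⊆ S} μ(S) ≥ α^m ∏_{i∈T} x_i, then Σ_{S ⊆ [n]} μ(S) · det(Σ_{i∈S} a_i a_iᵀ) ≥ α^m · det(Σ_{i∈[n]} x_i a_i a_iᵀ). -/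

import Mathlib

open Matrix Finset

/-- The squared determinant of the `m × m` submatrix of rows indexed by `T`
(zero if `T` does not have cardinality `m`). -/
noncomputable def Dsq {m n : ℕ} (a : Fin n → Fin m → ℝ) (T : Finset (Fin n)) : ℝ :=
  if h : T.card = m then (Matrix.of fun r c : Fin m => a (T.orderEmbOfFin h r) c).det ^ 2 else 0

lemma Dsq_nonneg {m n : ℕ} (a : Fin n → Fin m → ℝ) (T : Finset (Fin n)) : 0 ≤ Dsq a T := by
  unfold Dsq
  split
  · positivity
  · exact le_refl 0

lemma Dsq_eq_zero {m n : ℕ} (a : Fin n → Fin m → ℝ) {T : Finset (Fin n)} (h : T.card ≠ m) :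
    Dsq a T = 0 := dif_neg h

lemma image_orderEmbOfFin {n m : ℕ} (T : Finset (Fin n)) (hT : T.card = m) :
    Finset.image (fun r => T.orderEmbOfFin hT r) univ = T := by
  apply Finset.coe_injective
  rw [Finset.coe_image, Finset.coe_univ, Set.image_univ]
  exact T.range_orderEmbOfFin hT

/-- Summing over injective maps with a given image `T` is the same as summing over
permutations composed with the order embedding of `T`. -/
lemma fiber_bij {m n : ℕ} (F : (Fin m → Fin n) → ℝ) (T : Finset (Fin n)) (hT : T.card = m) :
    ∑ g ∈ (univ.filter (fun g : Fin m → Fin n => Function.Injective g)).filter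
        (fun g => Finset.image g univ = T), F g
    = ∑ σ : Equiv.Perm (Fin m), F (fun r => T.orderEmbOfFin hT (σ r)) := by
  classical
  have hmem : ∀ g : Fin m → Fin n,
      g ∈ (univ.filter (fun g : Fin m → Fin n => Function.Injective g)).filter
        (fun g => Finset.image g univ = T) ↔
      Function.Injective g ∧ Finset.image g univ = T := by
    intro g
    simp [Finset.mem_filter]
  have hgT : ∀ (g : Fin m → Fin n), Finset.image g univ = T → ∀ r, g r ∈ T := by
    intro g hg r
    rw [← hg]
    exact Finset.mem_image_of_mem g (Finset.mem_univ r)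
  refine Finset.sum_bij'
    (i := fun g hg => Equiv.ofBijective
      (fun r => (T.orderIsoOfFin hT).symm ⟨g r, hgT g ((hmem g).mp hg).2 r⟩)
      (Finite.injective_iff_bijective.mp (fun r1 r2 h => ((hmem g).mp hg).1 (by
        have := congrArg (fun z => ((T.orderIsoOfFin hT) z : Fin n)) h
        simpa using this))))
    (j := fun σ _ => fun r => T.orderEmbOfFin hT (σ r))
    (fun g hg => Finset.mem_univ _)
    (fun σ _ => ?_) ?_ ?_ ?_
  · -- j maps into the fiber
    rw [hmem]
    constructor
    · exact (T.orderEmbOfFin hT).injective.comp σ.injective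
    · have : Finset.image (fun r => T.orderEmbOfFin hT (σ r)) univ
          = Finset.image (fun r => T.orderEmbOfFin hT r) (Finset.image σ univ) := by
        rw [Finset.image_image]
        rfl
      rw [this, Finset.image_univ_equiv σ]  -- may need fixing
      exact image_orderEmbOfFin T hT
  · -- left inverse : j (i g) = g
    intro g hg
    funext r
    show T.orderEmbOfFin hT ((T.orderIsoOfFin hT).symm ⟨g r, _⟩) = g r
    rw [← T.coe_orderIsoOfFin_apply hT, OrderIso.apply_symm_apply]
  · -- right inverse : i (j σ) = σ
    intro σ _
    ext r
    have h5 : (T.orderIsoOfFin hT).symm ⟨(T.orderEmbOfFin hT) (σ r),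
        hgT _ (by
          rw [show (Finset.image (fun r => T.orderEmbOfFin hT (σ r)) univ)
              = Finset.image (fun r => T.orderEmbOfFin hT r) (Finset.image σ univ) by
            rw [Finset.image_image]; rfl, Finset.image_univ_equiv σ]
          exact image_orderEmbOfFin T hT) r⟩ = σ r := by
      rw [OrderIso.symm_apply_eq]
      exact Subtype.ext (by simp)
    exact congrArg _ h5
  · -- values agree
    intro g hg
    congr 1
    funext r
    show g r = T.orderEmbOfFin hT ((T.orderIsoOfFin hT).symm ⟨g r, _⟩)
    rw [← T.coe_orderIsoOfFin_apply hT, OrderIso.apply_symm_apply]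

/-- Sum over permutations of the determinant terms gives the squared subdeterminant. -/
lemma fiber_sum {m n : ℕ} (a : Fin n → Fin m → ℝ) (w : Fin n → ℝ) (T : Finset (Fin n))
    (hT : T.card = m) :
    ∑ σ : Equiv.Perm (Fin m),
      (∏ r, (w (T.orderEmbOfFin hT (σ r)) * a (T.orderEmbOfFin hT (σ r)) r)) *
        (Matrix.of fun r c : Fin m => a (T.orderEmbOfFin hT (σ r)) c).det
    = (∏ i ∈ T, w i) * Dsq a T := by
  classical
  set e : Fin m → Fin n := fun r => T.orderEmbOfFin hT r with he
  set B : ℝ := (Matrix.of fun r c : Fin m => a (e r) c).det with hB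
  have hwT : ∀ σ : Equiv.Perm (Fin m), ∏ r, w (e (σ r)) = ∏ i ∈ T, w i := by
    intro σ
    rw [Equiv.prod_comp σ (fun r => w (e r))]
    rw [← image_orderEmbOfFin T hT, Finset.prod_image]
    intro r1 _ r2 _ h
    exact (T.orderEmbOfFin hT).injective h
  have hdet : ∀ σ : Equiv.Perm (Fin m),
      (Matrix.of fun r c : Fin m => a (e (σ r)) c).det
        = Equiv.Perm.sign σ * B := by
    intro σ
    have : (Matrix.of fun r c : Fin m => a (e (σ r)) c)
        = (Matrix.of fun r c : Fin m => a (e r) c).submatrix σ id := rfl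
    rw [this, Matrix.det_permute]
  have hsum : ∑ σ : Equiv.Perm (Fin m),
      (((Equiv.Perm.sign σ : ℤ) : ℝ)) * ∏ r, a (e (σ r)) r = B := by
    rw [hB, Matrix.det_apply']
    rfl
  calc ∑ σ : Equiv.Perm (Fin m),
        (∏ r, (w (e (σ r)) * a (e (σ r)) r)) * (Matrix.of fun r c : Fin m => a (e (σ r)) c).det
      = ∑ σ : Equiv.Perm (Fin m),
        ((∏ i ∈ T, w i) * B) * ((((Equiv.Perm.sign σ : ℤ) : ℝ)) * ∏ r, a (e (σ r)) r) := by
        refine Finset.sum_congr rfl fun σ _ => ?_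
        rw [Finset.prod_mul_distrib, hwT σ, hdet σ]
        push_cast
        ring
    _ = ((∏ i ∈ T, w i) * B) * ∑ σ : Equiv.Perm (Fin m),
          (((Equiv.Perm.sign σ : ℤ) : ℝ)) * ∏ r, a (e (σ r)) r := by
        rw [Finset.mul_sum]
    _ = (∏ i ∈ T, w i) * Dsq a T := by
        rw [hsum, Dsq, dif_pos hT]
        ring

/-- Cauchy–Binet style expansion of the determinant of a weighted sum of rank-one matrices. -/
lemma cauchy_binet {m n : ℕ} (a : Fin n → Fin m → ℝ) (w : Fin n → ℝ) :
    (∑ i, w i • vecMulVec (a i) (a i)).det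
      = ∑ T : Finset (Fin n), (∏ i ∈ T, w i) * Dsq a T := by
  classical
  set F : (Fin m → Fin n) → ℝ :=
    fun g => (∏ r, (w (g r) * a (g r) r)) * (Matrix.of fun r c : Fin m => a (g r) c).det with hF
  -- Step 1: expand the determinant by multilinearity in the rows
  have step1 : (∑ i, w i • vecMulVec (a i) (a i)).det = ∑ g : Fin m → Fin n, F g := by
    have hM : (∑ i, w i • vecMulVec (a i) (a i))
        = Matrix.of (fun r => ∑ i, (w i * a i r) • a i) := by
      ext r c
      simp only [Matrix.sum_apply, Matrix.smul_apply, vecMulVec_apply, smul_eq_mul,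
        Matrix.of_apply, Finset.sum_apply, Pi.smul_apply]
      exact Finset.sum_congr rfl fun i _ => by ring
    rw [hM]
    have h1 : (Matrix.of (fun r => ∑ i, (w i * a i r) • a i)).det
        = Matrix.detRowAlternating (R := ℝ) (n := Fin m) (fun r => ∑ i, (w i * a i r) • a i) :=
      rfl
    rw [h1]
    have h2 := (Matrix.detRowAlternating (R := ℝ) (n := Fin m)).toMultilinearMap.map_sum
      (g := fun (r : Fin m) (i : Fin n) => (w i * a i r) • a i)
    simp only [AlternatingMap.coe_multilinearMap] at h2
    rw [h2]
    refine Finset.sum_congr rfl fun g _ => ?_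
    have h3 := (Matrix.detRowAlternating (R := ℝ) (n := Fin m)).toMultilinearMap.map_smul_univ
      (fun r => w (g r) * a (g r) r) (fun r => a (g r))
    simp only [AlternatingMap.coe_multilinearMap] at h3
    rw [h3, smul_eq_mul]
    rfl
  -- Step 2: non-injective terms vanish
  have step2 : ∑ g : Fin m → Fin n, F g
      = ∑ g ∈ univ.filter (fun g : Fin m → Fin n => Function.Injective g), F g := by
    refine (Finset.sum_filter_of_ne fun g _ hne => ?_).symm
    by_contra hg
    apply hne
    obtain ⟨r1, r2, h12, hne'⟩ := Function.not_injective_iff.mp hg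
    have hdet0 : (Matrix.of fun r c : Fin m => a (g r) c).det = 0 := by
      apply Matrix.det_zero_of_row_eq hne'
      funext c
      simp [h12]
    simp [hF, hdet0]
  -- Step 3: group injective maps by their image
  have step3 : ∑ g ∈ univ.filter (fun g : Fin m → Fin n => Function.Injective g), F g
      = ∑ T ∈ univ.powersetCard m,
          ∑ g ∈ (univ.filter (fun g : Fin m → Fin n => Function.Injective g)).filter
            (fun g => Finset.image g univ = T), F g := by
    refine (Finset.sum_fiberwise_of_maps_to (fun g hg => ?_) F).symm
    rw [Finset.mem_powersetCard]
    refine ⟨Finset.subset_univ _, ?_⟩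
    rw [Finset.card_image_of_injective _ (Finset.mem_filter.mp hg).2, Finset.card_univ,
      Fintype.card_fin]
  -- Step 4: evaluate each fiber
  have step4 : ∑ T ∈ univ.powersetCard m,
      ∑ g ∈ (univ.filter (fun g : Fin m → Fin n => Function.Injective g)).filter
        (fun g => Finset.image g univ = T), F g
      = ∑ T ∈ univ.powersetCard m, (∏ i ∈ T, w i) * Dsq a T := by
    refine Finset.sum_congr rfl fun T hT => ?_
    have hTm : T.card = m := (Finset.mem_powersetCard.mp hT).2
    rw [fiber_bij F T hTm]
    exact fiber_sum a w T hTm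
  rw [step1, step2, step3, step4]
  refine Finset.sum_subset (Finset.subset_univ _) fun T _ hT => ?_
  have : T.card ≠ m := by
    intro h
    exact hT (Finset.mem_powersetCard.mpr ⟨Finset.subset_univ _, h⟩)
  rw [Dsq_eq_zero a this, mul_zero]

lemma prod_ind {n : ℕ} (T S : Finset (Fin n)) :
    ∏ i ∈ T, (if i ∈ S then (1 : ℝ) else 0) = if T ⊆ S then 1 else 0 := by
  split_ifs with h
  · exact Finset.prod_eq_one fun i hi => if_pos (h hi)
  · obtain ⟨i, hiT, hiS⟩ := Finset.not_subset.mp h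
    exact Finset.prod_eq_zero hiT (if_neg hiS)

/-- An `m`-wise `α`-positively correlated distribution on the size-`k` subsets of `[n]`
yields an `α^m` approximation in expectation of the relaxed determinant objective. -/
theorem stmt2 (m k n : ℕ) (hm : 1 ≤ m) (hmk : m ≤ k) (hkn : k ≤ n)
    (a : Fin n → Fin m → ℝ) (x : Fin n → ℝ)
    (hx : ∀ i, x i ∈ Set.Icc (0 : ℝ) 1) (hxs : ∑ i, x i = (k : ℝ))
    (α : ℝ) (hα : α ∈ Set.Icc (0 : ℝ) 1)
    (μ : Finset (Fin n) → ℝ)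
    (hμ0 : ∀ S, μ S ∈ Set.Icc (0 : ℝ) 1)
    (hμ1 : ∑ S : Finset (Fin n), μ S = 1)
    (hsupp : ∀ S, μ S ≠ 0 → S.card = k)
    (hcorr : ∀ T : Finset (Fin n), T.card = m →
      ∑ S ∈ Finset.univ.filter (fun S : Finset (Fin n) => T ⊆ S), μ S
        ≥ α ^ m * ∏ i ∈ T, x i) :
    ∑ S : Finset (Fin n), μ S * (∑ i ∈ S, vecMulVec (a i) (a i)).det
      ≥ α ^ m * (∑ i, x i • vecMulVec (a i) (a i)).det := by
  classical
  have hdetS : ∀ S : Finset (Fin n), (∑ i ∈ S, vecMulVec (a i) (a i)).det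
      = ∑ T : Finset (Fin n), (if T ⊆ S then (1 : ℝ) else 0) * Dsq a T := by
    intro S
    have h1 : (∑ i ∈ S, vecMulVec (a i) (a i))
        = ∑ i, (if i ∈ S then (1 : ℝ) else 0) • vecMulVec (a i) (a i) := by
      have hite : ∀ i : Fin n, (if i ∈ S then (1 : ℝ) else 0) • vecMulVec (a i) (a i)
          = if i ∈ S then vecMulVec (a i) (a i) else 0 := by
        intro i; split_ifs <;> simp
      symm
      rw [Finset.sum_congr rfl fun i (_ : i ∈ univ) => hite i, Finset.sum_ite_mem,
        Finset.univ_inter]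
    rw [h1, cauchy_binet]
    exact Finset.sum_congr rfl fun T _ => by rw [prod_ind]
  calc ∑ S : Finset (Fin n), μ S * (∑ i ∈ S, vecMulVec (a i) (a i)).det
      = ∑ T : Finset (Fin n),
          (∑ S ∈ univ.filter (fun S : Finset (Fin n) => T ⊆ S), μ S) * Dsq a T := by
        rw [Finset.sum_congr rfl fun S (_ : S ∈ univ) => by rw [hdetS S, Finset.mul_sum]]
        rw [Finset.sum_comm]
        refine Finset.sum_congr rfl fun T _ => ?_
        rw [Finset.sum_filter, Finset.sum_mul]
        refine Finset.sum_congr rfl fun S _ => ?_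
        split_ifs <;> ring
    _ ≥ ∑ T : Finset (Fin n), (α ^ m * ∏ i ∈ T, x i) * Dsq a T := by
        refine Finset.sum_le_sum fun T _ => ?_
        by_cases hT : T.card = m
        · exact mul_le_mul_of_nonneg_right (hcorr T hT) (Dsq_nonneg a T)
        · rw [Dsq_eq_zero a hT]; simp
    _ = α ^ m * (∑ i, x i • vecMulVec (a i) (a i)).det := by
        rw [cauchy_binet, Finset.mul_sum]
        exact Finset.sum_congr rfl fun T _ => by ring
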